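/- Let R be a commutative ring in which 2 is invertible and let B be a commutative R-algebra that is free of rank 2 as an R-module. If x, y ∈ B satisfy tr_{B/R}(x) = 0 and tr_{B/R}(y) = 0, then the product x·y lies in the image of the structure map R → B. -/

import Mathlib

/-- A 2×2 matrix with trace zero squares to a scalar matrix. -/
lemma aux_sq_matrix {R : Type*} [CommRing R] (M : Matrix (Fin 2) (Fin 2) R)
    (h : Matrix.trace M = 0) :
    M * M = algebraMap R (Matrix (Fin 2) (Fin 2) R) (-(M.det)) := by
  have h11 : M 1 1 = -M 0 0 := by
    have := h
    simp [Matrix.trace, Fin.sum_univ_two] at this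
    linear_combination this
  ext i j
  fin_cases i <;> fin_cases j <;>
    simp [Matrix.mul_apply, Fin.sum_univ_two, Matrix.det_fin_two,
      Matrix.algebraMap_matrix_apply, h11] <;> ring

/-- An element of trace zero squares into the base ring. -/
lemma aux_sq_mem {R B : Type*} [CommRing R] [CommRing B] [Algebra R B]
    (v : Module.Basis (Fin 2) R B) (z : B) (hz : Algebra.trace R B z = 0) :
    z * z ∈ Set.range (algebraMap R B) := by
  refine ⟨-(Algebra.leftMulMatrix v z).det, ?_⟩
  apply Algebra.leftMulMatrix_injective v
  rw [map_mul, AlgHom.commutes]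
  rw [Algebra.trace_eq_matrix_trace v] at hz
  exact (aux_sq_matrix _ hz).symm

/-- Let `R` be a commutative ring in which `2` is invertible and let `B` be a commutative
`R`-algebra that is free of rank `2` as an `R`-module.  If `x, y ∈ B` have trace zero, then
`x * y` lies in the image of the structure map `R → B`. -/
theorem stacky_covers_mu2_trace_zero_mul (R B : Type*) [CommRing R] [CommRing B] [Algebra R B]
    (h2 : IsUnit (2 : R)) (v : Module.Basis (Fin 2) R B) (x y : B)
    (hx : Algebra.trace R B x = 0) (hy : Algebra.trace R B y = 0) :
    x * y ∈ Set.range (algebraMap R B) := by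
  obtain ⟨a, ha⟩ := aux_sq_mem v (x + y) (by simp [map_add, hx, hy])
  obtain ⟨b, hb⟩ := aux_sq_mem v x hx
  obtain ⟨c, hc⟩ := aux_sq_mem v y hy
  set t : R := ↑h2.unit⁻¹ with ht
  have h2t : t * 2 = 1 := by
    have := h2.unit.inv_mul
    rwa [h2.unit_spec] at this
  have hT : algebraMap R B t * 2 = 1 := by
    rw [show (2 : B) = algebraMap R B 2 from (map_ofNat _ 2).symm, ← map_mul, h2t, map_one]
  refine ⟨t * (a - b - c), ?_⟩
  rw [map_mul, map_sub, map_sub, ha, hb, hc]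
  linear_combination (x * y) * hT
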